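/- Let δ ≥ 2 and k ≥ 3δ. Denoting by C^0 the (2k, 2δ, {k})_q code of the mixed dimension construction and by C the code of the improved construction (adding a multilevel part), the difference of cardinalities satisfies |C| - |C^0| > q^{(δ+1)k - 2δ² - δ}(q^k - 1). -/

import Mathlib

/-- The `q`-ary Gaussian binomial coefficient `[a choose b]_q` as a rational number. -/
noncomputable def gaussBinom (q a b : ℕ) : ℚ :=
  ∏ i ∈ Finset.range b, ((q : ℚ) ^ a - (q : ℚ) ^ i) / ((q : ℚ) ^ b - (q : ℚ) ^ i)

/-- Delsarte's rank-distribution count `D(m,n,d,i)_q`. -/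
noncomputable def delsarteD (q m n d i : ℕ) : ℚ :=
  gaussBinom q (min m n) i *
    ∑ j ∈ Finset.range (i - d + 1),
      (-1 : ℚ) ^ j * (q : ℚ) ^ (j * (j - 1) / 2) * gaussBinom q i j *
        ((q : ℚ) ^ (max m n * (i - d - j + 1)) - 1)

/-- `Δ(m,n,d)_q = q^{max{m,n}(min{m,n}-d+1)}`, the size of an MRD code, with the
convention that it equals `1` when `min{m,n} < d`. -/
noncomputable def deltaMRD (q m n d : ℕ) : ℚ :=
  if min m n < d then 1 else (q : ℚ) ^ (max m n * (min m n - d + 1))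

/-- `Δ(m,n,d;r)_q = 1 + Σ_{i=d}^{r} D(m,n,d,i)_q`, the size of the rank-restricted
subcode of a linear MRD code. -/
noncomputable def deltaRes (q m n d r : ℕ) : ℚ :=
  1 + ∑ i ∈ Finset.Icc d r, delsarteD q m n d i

/-! ### Auxiliary lemmas -/

lemma gauss_nonneg {q : ℕ} (hq : 2 ≤ q) {a b : ℕ} (hba : b ≤ a) : 0 ≤ gaussBinom q a b := by
  have h1 : (1:ℚ) < q := by exact_mod_cast hq.trans_lt' one_lt_two
  apply Finset.prod_nonneg
  intro i hi
  have hib : i < b := Finset.mem_range.mp hi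
  apply div_nonneg
  · have := pow_le_pow_right₀ h1.le (hib.le.trans hba)
    linarith
  · have := pow_lt_pow_right₀ h1 hib
    linarith

lemma gauss_lb {q : ℕ} (hq : 2 ≤ q) {a b : ℕ} (hba : b ≤ a) :
    (q:ℚ) ^ (b * (a - b)) ≤ gaussBinom q a b := by
  have h1 : (1:ℚ) < q := by exact_mod_cast hq.trans_lt' one_lt_two
  have key : ∏ _i ∈ Finset.range b, (q:ℚ)^(a-b) ≤ gaussBinom q a b := by
    apply Finset.prod_le_prod
    · intro i _; positivity
    · intro i hi
      have hib : i < b := Finset.mem_range.mp hi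
      have hden : (0:ℚ) < (q:ℚ)^b - (q:ℚ)^i := by
        have := pow_lt_pow_right₀ h1 hib; linarith
      rw [le_div_iff₀ hden]
      have e1 : (q:ℚ)^(a-b) * (q:ℚ)^b = (q:ℚ)^a := by
        rw [← pow_add]; congr 1; omega
      have e2 : (q:ℚ)^i ≤ (q:ℚ)^(a-b) * (q:ℚ)^i := by
        nlinarith [pow_pos (by linarith : (0:ℚ) < q) i, one_le_pow₀ (n := a - b) h1.le]
      nlinarith [pow_pos (by linarith : (0:ℚ) < q) i]
  calc (q:ℚ)^(b*(a-b)) = ∏ _i ∈ Finset.range b, (q:ℚ)^(a-b) := by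
        rw [Finset.prod_const, ← pow_mul, Finset.card_range, Nat.mul_comm]
      _ ≤ _ := key

/-- Alternative product form of the Gaussian binomial. -/
noncomputable def gaussAlt (q a b : ℕ) : ℚ :=
  ∏ t ∈ Finset.range b, ((q : ℚ) ^ (a - t) - 1) / ((q : ℚ) ^ (t + 1) - 1)

lemma gauss_eq {q : ℕ} (hq : 2 ≤ q) {a b : ℕ} (hba : b ≤ a) :
    gaussBinom q a b = gaussAlt q a b := by
  have h1 : (1:ℚ) < q := by exact_mod_cast hq.trans_lt' one_lt_two
  have hq0 : (0:ℚ) < q := by linarith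
  unfold gaussBinom gaussAlt
  rw [Finset.prod_div_distrib, Finset.prod_div_distrib]
  have hnum : ∏ t ∈ Finset.range b, ((q:ℚ)^a - (q:ℚ)^t)
      = (∏ t ∈ Finset.range b, (q:ℚ)^t) * ∏ t ∈ Finset.range b, ((q:ℚ)^(a-t) - 1) := by
    rw [← Finset.prod_mul_distrib]
    apply Finset.prod_congr rfl
    intro t ht
    have htb : t < b := Finset.mem_range.mp ht
    have : (q:ℚ)^t * (q:ℚ)^(a-t) = (q:ℚ)^a := by
      rw [← pow_add]; congr 1; omega
    rw [mul_sub, mul_one, this]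
  have hden : ∏ t ∈ Finset.range b, ((q:ℚ)^b - (q:ℚ)^t)
      = (∏ t ∈ Finset.range b, (q:ℚ)^t) * ∏ t ∈ Finset.range b, ((q:ℚ)^(t+1) - 1) := by
    have step : ∏ t ∈ Finset.range b, ((q:ℚ)^b - (q:ℚ)^t)
        = (∏ t ∈ Finset.range b, (q:ℚ)^t) * ∏ t ∈ Finset.range b, ((q:ℚ)^(b-t) - 1) := by
      rw [← Finset.prod_mul_distrib]
      apply Finset.prod_congr rfl
      intro t ht
      have htb : t < b := Finset.mem_range.mp ht
      have : (q:ℚ)^t * (q:ℚ)^(b-t) = (q:ℚ)^b := by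
        rw [← pow_add]; congr 1; omega
      rw [mul_sub, mul_one, this]
    rw [step]
    congr 1
    rw [← Finset.prod_range_reflect]
    apply Finset.prod_congr rfl
    intro t ht
    have htb : t < b := Finset.mem_range.mp ht
    congr 2
    omega
  rw [hnum, hden, mul_div_mul_left]
  apply Finset.prod_ne_zero_iff.mpr
  intro t _
  positivity

lemma gauss_succ {q : ℕ} (hq : 2 ≤ q) {a b : ℕ} (hba : b < a) :
    gaussBinom q a (b + 1) = gaussBinom q a b * (((q:ℚ)^(a-b) - 1) / ((q:ℚ)^(b+1) - 1)) := by
  rw [gauss_eq hq hba.le, gauss_eq hq hba]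
  unfold gaussAlt
  rw [Finset.prod_range_succ]

lemma alt_nonneg : ∀ (n : ℕ) (f : ℕ → ℚ), (∀ j, j < n → 0 ≤ f j) →
    (∀ j, j + 1 < n → f (j + 1) ≤ f j) →
    0 ≤ ∑ j ∈ Finset.range n, (-1 : ℚ) ^ j * f j
  | 0, f, _, _ => by simp
  | 1, f, h0, _ => by simpa using h0 0 one_pos
  | (n + 2), f, h0, h1 => by
    have key : ∑ j ∈ Finset.range (n + 2), (-1 : ℚ) ^ j * f j
        = (f 0 - f 1) + ∑ j ∈ Finset.range n, (-1 : ℚ) ^ j * f (j + 2) := by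
      rw [Finset.sum_range_succ' _ (n + 1), Finset.sum_range_succ' _ n]
      have : ∀ x ∈ Finset.range n, (-1:ℚ)^(x+1+1) * f (x+1+1) = (-1:ℚ)^x * f (x+2) := by
        intro x _
        have : (-1:ℚ)^(x+1+1) = (-1:ℚ)^x := by
          rw [pow_succ, pow_succ]; ring
        rw [this]
      rw [Finset.sum_congr rfl this]
      ring
    rw [key]
    have hrec := alt_nonneg n (fun j => f (j + 2)) (fun j hj => h0 (j + 2) (by omega))
      (fun j hj => h1 (j + 2) (by omega))
    have h01 := h1 0 (by omega)
    linarith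

lemma tri_succ (j : ℕ) : (j + 1) * j / 2 = j * (j - 1) / 2 + j := by
  cases j with
  | zero => rfl
  | succ s =>
    simp only [Nat.add_sub_cancel]
    have h1 : (s + 1 + 1) * (s + 1) = (s + 1) * s + 2 * (s + 1) := by ring
    have h2 : 2 ∣ (s + 1) * s := by
      have := Nat.even_mul_succ_self s
      exact (Even.two_dvd (by rwa [Nat.mul_comm] at this))
    omega

set_option maxHeartbeats 1600000 in
lemma delsarteD_nonneg {q : ℕ} (hq : 2 ≤ q) {m n d i : ℕ} (hd : 0 < d) (hdi : d ≤ i)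
    (hi : i ≤ min m n) (hia : i < max m n) : 0 ≤ delsarteD q m n d i := by
  have h1 : (1:ℚ) < q := by exact_mod_cast hq.trans_lt' one_lt_two
  have hq0 : (0:ℚ) < q := by linarith
  set A := max m n with hA
  set f : ℕ → ℚ := fun j =>
    (q : ℚ) ^ (j * (j - 1) / 2) * gaussBinom q i j * ((q : ℚ) ^ (A * (i - d - j + 1)) - 1)
    with hf
  have hsum : ∑ j ∈ Finset.range (i - d + 1),
      (-1 : ℚ) ^ j * (q : ℚ) ^ (j * (j - 1) / 2) * gaussBinom q i j *
        ((q : ℚ) ^ (A * (i - d - j + 1)) - 1)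
      = ∑ j ∈ Finset.range (i - d + 1), (-1 : ℚ) ^ j * f j := by
    apply Finset.sum_congr rfl
    intro j _
    simp only [hf]
    ring
  unfold delsarteD
  rw [← hA, hsum]
  apply mul_nonneg (gauss_nonneg hq hi)
  apply alt_nonneg
  · intro j hj
    have hji : j ≤ i := by omega
    apply mul_nonneg (mul_nonneg (by positivity) (gauss_nonneg hq hji))
    have : (1:ℚ) ≤ (q:ℚ) ^ (A * (i - d - j + 1)) := one_le_pow₀ h1.le
    linarith
  · intro j hj
    have hjs : j < i - d := by omega
    have hji : j < i := by omega
    simp only [hf]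
    rw [gauss_succ hq hji]
    have e1 : (j + 1) * (j + 1 - 1) / 2 = j * (j - 1) / 2 + j := by
      simpa using tri_succ j
    have e2 : i - d - (j + 1) + 1 = i - d - j := by omega
    have e3 : A * (i - d - j + 1) = A * (i - d - j) + A := by ring
    rw [e1, e2, e3, pow_add (q:ℚ) (j*(j-1)/2) j, pow_add (q:ℚ) (A*(i-d-j)) A]
    set G := gaussBinom q i j with hG
    set X := (q:ℚ) ^ (A * (i - d - j)) with hX
    have hGn : 0 ≤ G := gauss_nonneg hq hji.le
    have hP : (0:ℚ) ≤ (q:ℚ) ^ (j * (j - 1) / 2) := by positivity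
    have hX1 : (1:ℚ) ≤ X := one_le_pow₀ h1.le
    have hqj1 : (2:ℚ) ≤ (q:ℚ) ^ (j + 1) := by
      calc (2:ℚ) ≤ (q:ℚ) := by exact_mod_cast hq
        _ = (q:ℚ)^1 := (pow_one _).symm
        _ ≤ (q:ℚ)^(j+1) := pow_le_pow_right₀ h1.le (by omega)
    have hden : (0:ℚ) < (q:ℚ)^(j+1) - 1 := by linarith
    have hqi : (q:ℚ)^j * ((q:ℚ)^(i-j) - 1) = (q:ℚ)^i - (q:ℚ)^j := by
      rw [mul_sub, mul_one, ← pow_add]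
      congr 2
      omega
    have hiA : (q:ℚ)^i ≤ (q:ℚ)^A := pow_le_pow_right₀ h1.le hia.le
    have hqjpos : (0:ℚ) < (q:ℚ)^j := by positivity
    have hqipos : (1:ℚ) ≤ (q:ℚ)^i := one_le_pow₀ h1.le
    have core : (q:ℚ)^j * (((q:ℚ)^(i-j) - 1) / ((q:ℚ)^(j+1) - 1)) * (X - 1)
        ≤ (q:ℚ)^A * X - 1 := by
      rw [mul_div_assoc', div_mul_eq_mul_div, div_le_iff₀ hden]
      have step1 : (q:ℚ)^j * ((q:ℚ)^(i-j) - 1) * (X - 1) ≤ ((q:ℚ)^i - (q:ℚ)^j) * (X - 1) := by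
        rw [hqi]
      have step2 : ((q:ℚ)^i - (q:ℚ)^j) * (X - 1) ≤ (q:ℚ)^i * (X - 1) := by
        have h := mul_nonneg hqjpos.le (sub_nonneg.mpr hX1)
        nlinarith
      have step3 : (q:ℚ)^i * (X - 1) ≤ (q:ℚ)^A * X - 1 := by
        have h := mul_nonneg (sub_nonneg.mpr hiA) (by linarith : (0:ℚ) ≤ X)
        nlinarith
      have hA1 : (1:ℚ) ≤ (q:ℚ)^A := one_le_pow₀ h1.le
      have hAX : (1:ℚ) ≤ (q:ℚ)^A * X := by
        have := mul_le_mul hA1 hX1 (by norm_num) (by linarith)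
        linarith
      have step4 : (q:ℚ)^A * X - 1 ≤ ((q:ℚ)^A * X - 1) * ((q:ℚ)^(j+1) - 1) := by
        have := le_mul_of_one_le_right (by linarith : (0:ℚ) ≤ (q:ℚ)^A * X - 1)
          (by linarith : (1:ℚ) ≤ (q:ℚ)^(j+1) - 1)
        linarith
      linarith
    have key := mul_le_mul_of_nonneg_left core (mul_nonneg hP hGn)
    linarith [key]

theorem improvement_lower_bound (q δ k : ℕ)
    (hq : ∃ p m : ℕ, p.Prime ∧ 0 < m ∧ q = p ^ m)
    (hδ : 2 ≤ δ) (hk : 3 * δ ≤ k) :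
    (q : ℚ) ^ ((δ + 1) * k - 2 * δ ^ 2 - δ) * ((q : ℚ) ^ k - 1) <
      deltaRes q (k - δ) k δ (k - 2 * δ) *
        ∑ j ∈ Finset.Icc 1 (k / δ), deltaMRD q (k - j * δ) δ δ := by
  -- q ≥ 2
  obtain ⟨p, m, hp, hm, rfl⟩ := hq
  have hq2 : 2 ≤ p ^ m := by
    calc 2 ≤ p := hp.two_le
      _ = p ^ 1 := (pow_one p).symm
      _ ≤ p ^ m := Nat.pow_le_pow_right hp.pos hm
  set q := p ^ m with hqdef
  clear_value q
  clear hp hm hqdef p m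
  have h1 : (1:ℚ) < q := by exact_mod_cast hq2.trans_lt' one_lt_two
  have hqk1 : (1:ℚ) < (q:ℚ)^k := by
    have hk0 : k ≠ 0 := by omega
    exact lt_of_lt_of_le h1 (le_self_pow₀ (by linarith) hk0)
  -- value of D at i = δ
  have hDδ : delsarteD q (k - δ) k δ δ = gaussBinom q (k - δ) δ * ((q:ℚ)^k - 1) := by
    unfold delsarteD
    have hmin : min (k - δ) k = k - δ := min_eq_left (by omega)
    have hmax : max (k - δ) k = k := max_eq_right (by omega)
    have hδδ : δ - δ + 1 = 1 := by omega
    rw [hmin, hmax, hδδ, Finset.sum_range_one]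
    have hg0 : gaussBinom q δ 0 = 1 := by simp [gaussBinom]
    have he : δ - δ - 0 + 1 = 1 := by omega
    rw [hg0, he]
    norm_num
  -- lower bound for deltaRes
  have hsum_lb : delsarteD q (k - δ) k δ δ
      ≤ ∑ i ∈ Finset.Icc δ (k - 2 * δ), delsarteD q (k - δ) k δ i := by
    apply Finset.single_le_sum (f := fun i => delsarteD q (k - δ) k δ i)
    · intro i hi
      have hi' := Finset.mem_Icc.mp hi
      apply delsarteD_nonneg hq2 (by omega) (by omega) (by omega) (by omega)
    · exact Finset.mem_Icc.mpr ⟨le_refl δ, by omega⟩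
  have hgauss : (q:ℚ)^(δ*(k-2*δ)) ≤ gaussBinom q (k - δ) δ := by
    have := gauss_lb hq2 (a := k - δ) (b := δ) (by omega)
    have he : δ * ((k - δ) - δ) = δ * (k - 2*δ) := by congr 1; omega
    rwa [he] at this
  have hA : (q:ℚ)^(δ*(k-2*δ)) * ((q:ℚ)^k - 1) < deltaRes q (k - δ) k δ (k - 2*δ) := by
    unfold deltaRes
    have h2 : (q:ℚ)^(δ*(k-2*δ)) * ((q:ℚ)^k - 1) ≤ gaussBinom q (k - δ) δ * ((q:ℚ)^k - 1) :=
      mul_le_mul_of_nonneg_right hgauss (by linarith)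
    rw [← hDδ] at h2
    linarith
  -- lower bound for the multilevel sum
  have hB : (q:ℚ)^(k-δ) ≤ ∑ j ∈ Finset.Icc 1 (k / δ), deltaMRD q (k - j * δ) δ δ := by
    have hval : deltaMRD q (k - 1 * δ) δ δ = (q:ℚ)^(k-δ) := by
      unfold deltaMRD
      have h1δ : k - 1 * δ = k - δ := by omega
      rw [h1δ]
      have hmin : min (k - δ) δ = δ := min_eq_right (by omega)
      have hmax : max (k - δ) δ = k - δ := max_eq_left (by omega)
      rw [hmin, hmax, if_neg (lt_irrefl δ)]
      have e : (k - δ) * (δ - δ + 1) = k - δ := by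
        have h' : δ - δ + 1 = 1 := by omega
        rw [h', Nat.mul_one]
      rw [e]
    rw [← hval]
    apply Finset.single_le_sum (f := fun j => deltaMRD q (k - j * δ) δ δ)
    · intro j _
      unfold deltaMRD
      split
      · norm_num
      · positivity
    · refine Finset.mem_Icc.mpr ⟨le_refl 1, ?_⟩
      rw [Nat.le_div_iff_mul_le (by omega)]
      omega
  -- exponent arithmetic
  have hE : (δ + 1) * k - 2 * δ ^ 2 - δ = δ * (k - 2 * δ) + (k - δ) := by
    obtain ⟨c, rfl⟩ := Nat.exists_eq_add_of_le hk
    have e1 : 3 * δ + c - 2 * δ = δ + c := by omega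
    have e2 : 3 * δ + c - δ = 2 * δ + c := by omega
    rw [e1, e2]
    have hx : (δ + 1) * (3 * δ + c) = 2 * δ ^ 2 + (δ * (δ + c) + (2 * δ + c) + δ) := by ring
    rw [hx, Nat.add_sub_cancel_left, Nat.add_sub_cancel]
  -- assemble
  have hApos : (0:ℚ) ≤ (q:ℚ)^(δ*(k-2*δ)) * ((q:ℚ)^k - 1) := by
    have : (0:ℚ) ≤ (q:ℚ)^(δ*(k-2*δ)) := by positivity
    nlinarith
  have hBpos : (0:ℚ) < (q:ℚ)^(k-δ) := by positivity
  have hRes_pos : (0:ℚ) ≤ deltaRes q (k - δ) k δ (k - 2*δ) := le_trans hApos hA.le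
  calc (q:ℚ) ^ ((δ + 1) * k - 2 * δ ^ 2 - δ) * ((q:ℚ)^k - 1)
      = (q:ℚ)^(δ*(k-2*δ)) * ((q:ℚ)^k - 1) * (q:ℚ)^(k-δ) := by
        rw [hE, pow_add]; ring
    _ < deltaRes q (k - δ) k δ (k - 2*δ) * (q:ℚ)^(k-δ) :=
        mul_lt_mul_of_pos_right hA hBpos
    _ ≤ deltaRes q (k - δ) k δ (k - 2*δ) *
          ∑ j ∈ Finset.Icc 1 (k / δ), deltaMRD q (k - j * δ) δ δ :=
        mul_le_mul_of_nonneg_left hB hRes_pos
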